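/- Let f : (0,∞) → ℝ have the Baire property and suppose f(qx) = f(x) for every positive rational q and quasi all x > 0 (all x off a meagre set). Then f is constant on the complement of a meagre set. -/

import Mathlib

open Filter Set Topology

lemma meagre_iUnion_ctble {X : Type*} [TopologicalSpace X] {ι : Type*} [Countable ι]
    {s : ι → Set X} (hs : ∀ i, IsMeagre (s i)) : IsMeagre (⋃ i, s i) := by
  rw [IsMeagre, compl_iUnion]
  exact countable_iInter_mem.mpr hs

lemma meagre_union' {X : Type*} [TopologicalSpace X] {s t : Set X}
    (hs : IsMeagre s) (ht : IsMeagre t) : IsMeagre (s ∪ t) := by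
  rw [IsMeagre, compl_union]
  exact inter_mem hs ht

lemma not_meagre_Ioi : ¬ IsMeagre (Ioi (0 : ℝ)) := by
  intro h
  obtain ⟨x, hx1, hx2⟩ := (dense_of_mem_residual h).exists_mem_open isOpen_Ioi
    nonempty_Ioi
  exact hx1 hx2

/-- Zero-one law: a Baire measurable subset of ℝ invariant (off a meagre set)
under multiplication by positive rationals is meagre or comeagre in `Ioi 0`. -/
lemma key_dichotomy (s : Set ℝ) (hs : BaireMeasurableSet s) (M : Set ℝ) (hM : IsMeagre M)
    (hinv : ∀ x ∈ Ioi (0 : ℝ) \ M, ∀ q : ℚ, 0 < q → ((q : ℝ) * x ∈ s ↔ x ∈ s)) :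
    IsMeagre (s ∩ Ioi 0) ∨ IsMeagre (Ioi 0 \ s) := by
  obtain ⟨V, hVo, hsV⟩ := hs.residualEq_isOpen
  set N : Set ℝ := {x : ℝ | ¬ (x ∈ s ↔ x ∈ V)} with hNdef
  have hN : IsMeagre N := by
    rw [IsMeagre]
    have h1 := eventuallyEq_set.mp hsV
    have : Nᶜ = {x : ℝ | x ∈ s ↔ x ∈ V} := by
      ext x; simp [hNdef]
    rw [this]
    exact h1
  by_cases hV0 : (V ∩ Ioi 0).Nonempty
  · right
    obtain ⟨x₀, hx₀V, hx₀⟩ := hV0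
    have hmq : ∀ q : {q : ℚ // 0 < q}, IsMeagre ((fun x : ℝ => ((q : ℚ) : ℝ) * x) ⁻¹' N) := by
      rintro ⟨q, hq⟩
      have hq' : ((q : ℝ)) ≠ 0 := ne_of_gt (by exact_mod_cast hq)
      exact hN.preimage_of_isOpenMap (Homeomorph.mulLeft₀ (q : ℝ) hq').continuous
        (Homeomorph.mulLeft₀ (q : ℝ) hq').isOpenMap
    have hBad : IsMeagre (M ∪ ⋃ q : {q : ℚ // 0 < q},
        ((fun x : ℝ => ((q : ℚ) : ℝ) * x) ⁻¹' N)) :=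
      meagre_union' hM (meagre_iUnion_ctble hmq)
    refine hBad.mono ?_
    rintro x ⟨hx, hxs⟩
    by_contra hxBad

    have hxM : x ∉ M := fun h => hxBad (Or.inl h)
    have hxU : ∀ q : ℚ, 0 < q → ¬ ((q : ℝ) * x ∈ N) := by
      intro q hq hmem
      exact hxBad (Or.inr (mem_iUnion.mpr ⟨⟨q, hq⟩, hmem⟩))
    -- find a rational q > 0 with q * x ∈ V
    obtain ⟨ε, hε, hball⟩ := Metric.isOpen_iff.mp hVo x₀ hx₀V
    set δ : ℝ := min ε x₀ with hδdef
    have hδ : 0 < δ := lt_min hε hx₀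
    have hsub : Ioo (x₀ - δ / 2) (x₀ + δ / 2) ⊆ V := by
      intro y hy
      apply hball
      rw [Metric.mem_ball, Real.dist_eq, abs_lt]
      constructor
      · have := hy.1; have : x₀ - δ / 2 < y := hy.1
        have hδε : δ ≤ ε := min_le_left _ _
        nlinarith
      · have : y < x₀ + δ / 2 := hy.2
        have hδε : δ ≤ ε := min_le_left _ _
        nlinarith
    have hlb : 0 < x₀ - δ / 2 := by
      have : δ ≤ x₀ := min_le_right _ _
      nlinarith
    have hxpos : (0 : ℝ) < x := hx
    obtain ⟨q, hq1, hq2⟩ := exists_rat_btwn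
      (div_lt_div_of_pos_right (by nlinarith : x₀ - δ / 2 < x₀ + δ / 2) hxpos)
    have hqpos : (0 : ℚ) < q := by
      have : (0 : ℝ) < (q : ℝ) := lt_trans (div_pos hlb hxpos) hq1
      exact_mod_cast this
    have hqxV : (q : ℝ) * x ∈ V := by
      apply hsub
      constructor
      · calc x₀ - δ / 2 = (x₀ - δ / 2) / x * x := by field_simp
          _ < (q : ℝ) * x := by exact mul_lt_mul_of_pos_right hq1 hxpos
      · calc (q : ℝ) * x < (x₀ + δ / 2) / x * x := mul_lt_mul_of_pos_right hq2 hxpos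
          _ = x₀ + δ / 2 := by field_simp
    have hqxN := hxU q hqpos
    have hqxs : (q : ℝ) * x ∈ s := by
      by_contra h
      exact hqxN (fun hiff => h (hiff.mpr hqxV))
    exact hxs ((hinv x ⟨hx, hxM⟩ q hqpos).mp hqxs)
  · left
    refine hN.mono ?_
    rintro x ⟨hxs, hx⟩
    intro hiff
    exact hV0 ⟨x, hiff.mp hxs, hx⟩

lemma disj_intervals {u v : ℝ} (h : u < v) :
    ∃ a b a' b' : ℚ, u ∈ Ioo (a : ℝ) (b : ℝ) ∧ v ∈ Ioo (a' : ℝ) (b' : ℝ) ∧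
      ∀ y : ℝ, y ∈ Ioo (a : ℝ) (b : ℝ) → y ∉ Ioo (a' : ℝ) (b' : ℝ) := by
  obtain ⟨b, hub, hbv⟩ := exists_rat_btwn h
  obtain ⟨a, ha⟩ := exists_rat_lt u
  obtain ⟨b', hvb'⟩ := exists_rat_gt v
  exact ⟨a, b, b, b', ⟨ha, hub⟩, ⟨hbv, hvb'⟩, fun y hy hy' => absurd hy'.1 (not_lt.mpr hy.2.le)⟩

theorem stmt_14 (f : ℝ → ℝ)
    (hf : ∀ U : Set ℝ, IsOpen U → BaireMeasurableSet (f ⁻¹' U))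
    (hinv : ∃ M : Set ℝ, IsMeagre M ∧
      ∀ x ∈ Ioi (0 : ℝ) \ M, ∀ q : ℚ, 0 < q → f ((q : ℝ) * x) = f x) :
    ∃ (c : ℝ) (M : Set ℝ), IsMeagre M ∧ ∀ x ∈ Ioi (0 : ℝ) \ M, f x = c := by
  classical
  obtain ⟨M, hM, hMf⟩ := hinv
  -- dichotomy for each rational interval
  have dich : ∀ p : ℚ × ℚ, IsMeagre (f ⁻¹' Ioo ((p.1 : ℝ)) (p.2 : ℝ) ∩ Ioi 0) ∨
      IsMeagre (Ioi 0 \ f ⁻¹' Ioo ((p.1 : ℝ)) (p.2 : ℝ)) := by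
    intro p
    apply key_dichotomy _ (hf _ isOpen_Ioo) M hM
    intro x hx q hq
    simp only [mem_preimage, hMf x hx q hq]
  set B : Set ℝ := ⋃ p : ℚ × ℚ,
    if IsMeagre (f ⁻¹' Ioo ((p.1 : ℝ)) (p.2 : ℝ) ∩ Ioi 0) then
      f ⁻¹' Ioo ((p.1 : ℝ)) (p.2 : ℝ) ∩ Ioi 0 else ∅ with hBdef
  have hB : IsMeagre B := by
    apply meagre_iUnion_ctble
    intro p
    split_ifs with h
    · exact h
    · exact IsMeagre.empty
  -- for x outside B in Ioi 0, preimages of rational intervals around f x are comeagre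
  have comeag : ∀ x ∈ Ioi (0 : ℝ) \ B, ∀ a b : ℚ, f x ∈ Ioo ((a : ℝ)) (b : ℝ) →
      IsMeagre (Ioi 0 \ f ⁻¹' Ioo ((a : ℝ)) (b : ℝ)) := by
    rintro x ⟨hx, hxB⟩ a b hfx
    rcases dich (a, b) with h | h
    · exfalso
      apply hxB
      rw [hBdef]
      refine mem_iUnion.mpr ⟨(a, b), ?_⟩
      rw [if_pos h]
      exact ⟨hfx, hx⟩
    · exact h
  -- pick a base point
  obtain ⟨x₀, hx₀B, hx₀⟩ := (dense_of_mem_residual hB).exists_mem_open isOpen_Ioi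
    nonempty_Ioi
  refine ⟨f x₀, B, hB, ?_⟩
  rintro x ⟨hx, hxB⟩
  by_contra hne
  rcases lt_or_gt_of_ne hne with hlt | hlt
  · obtain ⟨a, b, a', b', h1, h2, hdisj⟩ := disj_intervals hlt
    have m1 := comeag x ⟨hx, hxB⟩ a b h1
    have m2 := comeag x₀ ⟨hx₀, hx₀B⟩ a' b' h2
    apply not_meagre_Ioi
    refine (meagre_union' m1 m2).mono ?_
    intro y hy
    by_cases hmem : f y ∈ Ioo ((a : ℝ)) (b : ℝ)
    · exact Or.inr ⟨hy, fun h => hdisj _ hmem h⟩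
    · exact Or.inl ⟨hy, hmem⟩
  · obtain ⟨a, b, a', b', h1, h2, hdisj⟩ := disj_intervals hlt
    have m1 := comeag x₀ ⟨hx₀, hx₀B⟩ a b h1
    have m2 := comeag x ⟨hx, hxB⟩ a' b' h2
    apply not_meagre_Ioi
    refine (meagre_union' m1 m2).mono ?_
    intro y hy
    by_cases hmem : f y ∈ Ioo ((a : ℝ)) (b : ℝ)
    · exact Or.inr ⟨hy, fun h => hdisj _ hmem h⟩
    · exact Or.inl ⟨hy, hmem⟩
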